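/- Let F be a field, A ∈ F^n⊗F^m a tensor, and let u_1⊗v_1,…,u_s⊗v_s ∈ F^n⊗F^m be linearly independent pure tensors spanning a subspace U. Define Â = A⊗e_{s+1} + Σ_{k=1}^s u_k⊗v_k⊗e_k ∈ F^n⊗F^m⊗F^{s+1}. Then rank(A,U) + s ≤ rank(Â), where rank(A,U) = min{rank(B) : B ∈ A+U} and rank denotes tensor rank. -/

import Mathlib

set_option synthInstance.maxHeartbeats 1000000
set_option maxHeartbeats 2000000

open TensorProduct Matrix

/-- The tensor rank of a second-order tensor `T ∈ Fⁿ ⊗ Fᵐ`: the smallest number of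
pure tensors `x ⊗ y` summing to `T`. -/
noncomputable def tensorRank2 {F : Type*} [Field F] {n m : ℕ}
    (T : (Fin n → F) ⊗[F] (Fin m → F)) : ℕ :=
  sInf {r : ℕ | ∃ (x : Fin r → Fin n → F) (y : Fin r → Fin m → F),
    T = ∑ i : Fin r, x i ⊗ₜ[F] y i}

/-- The tensor rank of a third-order tensor `T ∈ Fⁿ ⊗ Fᵐ ⊗ Fᵖ`: the smallest number of
pure tensors `x ⊗ y ⊗ z` summing to `T`. -/
noncomputable def tensorRank3 {F : Type*} [Field F] {n m p : ℕ}
    (T : ((Fin n → F) ⊗[F] (Fin m → F)) ⊗[F] (Fin p → F)) : ℕ :=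
  sInf {r : ℕ | ∃ (x : Fin r → Fin n → F) (y : Fin r → Fin m → F) (z : Fin r → Fin p → F),
    T = ∑ i : Fin r, (x i ⊗ₜ[F] y i) ⊗ₜ[F] z i}

/-- `rank(A, U) = min { rank B | B ∈ A + U }`. -/
noncomputable def rankAU {F : Type*} [Field F] {n m : ℕ}
    (A : (Fin n → F) ⊗[F] (Fin m → F))
    (U : Submodule F ((Fin n → F) ⊗[F] (Fin m → F))) : ℕ :=
  sInf {r : ℕ | ∃ u ∈ U, tensorRank2 (A + u) = r}

section Aux

variable {F : Type*} [Field F]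

lemma exists_sum_tmul {M N : Type*} [AddCommGroup M] [Module F M] [AddCommGroup N] [Module F N]
    (T : M ⊗[F] N) : ∃ (r : ℕ) (x : Fin r → M) (y : Fin r → N),
      T = ∑ i : Fin r, x i ⊗ₜ[F] y i := by
  induction T using TensorProduct.induction_on with
  | zero => exact ⟨0, Fin.elim0, Fin.elim0, by simp⟩
  | tmul a b => exact ⟨1, fun _ => a, fun _ => b, by simp⟩
  | add t1 t2 h1 h2 =>
    obtain ⟨r1, x1, y1, e1⟩ := h1
    obtain ⟨r2, x2, y2, e2⟩ := h2
    exact ⟨r1 + r2, Fin.append x1 x2, Fin.append y1 y2, by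
      rw [Fin.sum_univ_add]; simp [Fin.append_left, Fin.append_right, e1, e2]⟩

lemma exists_sum_tmul3 {M N P : Type*} [AddCommGroup M] [Module F M] [AddCommGroup N] [Module F N]
    [AddCommGroup P] [Module F P]
    (T : (M ⊗[F] N) ⊗[F] P) : ∃ (r : ℕ) (x : Fin r → M) (y : Fin r → N) (z : Fin r → P),
      T = ∑ i : Fin r, (x i ⊗ₜ[F] y i) ⊗ₜ[F] z i := by
  induction T using TensorProduct.induction_on with
  | zero => exact ⟨0, Fin.elim0, Fin.elim0, Fin.elim0, by simp⟩
  | tmul a b =>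
    obtain ⟨r, x, y, e⟩ := exists_sum_tmul (F := F) a
    exact ⟨r, x, y, fun _ => b, by rw [e, TensorProduct.sum_tmul]⟩
  | add t1 t2 h1 h2 =>
    obtain ⟨r1, x1, y1, z1, e1⟩ := h1
    obtain ⟨r2, x2, y2, z2, e2⟩ := h2
    exact ⟨r1 + r2, Fin.append x1 x2, Fin.append y1 y2, Fin.append z1 z2, by
      rw [Fin.sum_univ_add]; simp [Fin.append_left, Fin.append_right, e1, e2]⟩

noncomputable def sliceMap {M P : Type*} [AddCommGroup M] [Module F M]
    [AddCommGroup P] [Module F P] (φ : P →ₗ[F] F) : M ⊗[F] P →ₗ[F] M :=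
  (TensorProduct.rid F M).toLinearMap.comp (LinearMap.lTensor M φ)

@[simp] lemma sliceMap_tmul {M P : Type*} [AddCommGroup M] [Module F M]
    [AddCommGroup P] [Module F P] (φ : P →ₗ[F] F) (t : M) (z : P) :
    sliceMap φ (t ⊗ₜ[F] z) = φ z • t := by
  simp [sliceMap]

lemma core_lemma {F : Type*} [Field F] {n m s r : ℕ}
    (A : (Fin n → F) ⊗[F] (Fin m → F))
    (u : Fin s → Fin n → F) (v : Fin s → Fin m → F)
    (hli : LinearIndependent F fun k : Fin s => u k ⊗ₜ[F] v k)
    (U : Submodule F ((Fin n → F) ⊗[F] (Fin m → F)))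
    (hU : U = Submodule.span F (Set.range fun k : Fin s => u k ⊗ₜ[F] v k))
    (x : Fin r → Fin n → F) (y : Fin r → Fin m → F) (z : Fin r → Fin (s + 1) → F)
    (hA : A ⊗ₜ[F] (Pi.single (Fin.last s) 1 : Fin (s + 1) → F)
          + ∑ k : Fin s, (u k ⊗ₜ[F] v k) ⊗ₜ[F]
              (Pi.single (Fin.castSucc k) 1 : Fin (s + 1) → F)
        = ∑ i : Fin r, (x i ⊗ₜ[F] y i) ⊗ₜ[F] z i) :
    rankAU A U + s ≤ r := by
  classical
  -- the key slice identity
  have key : ∀ φ : (Fin (s+1) → F) →ₗ[F] F,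
      φ (Pi.single (Fin.last s) 1) • A
        + ∑ k : Fin s, φ (Pi.single (Fin.castSucc k) 1) • (u k ⊗ₜ[F] v k)
      = ∑ i : Fin r, φ (z i) • (x i ⊗ₜ[F] y i) := by
    intro φ
    have := congrArg (sliceMap φ) hA
    rw [map_add, map_sum, map_sum] at this
    simpa using this
  -- rows of the coefficient matrix are linearly independent
  have hrows : LinearIndependent F (fun k : Fin s => fun i : Fin r => z i (Fin.castSucc k)) := by
    rw [Fintype.linearIndependent_iff]
    intro g hg
    have hφ := key (∑ k : Fin s, g k • LinearMap.proj (Fin.castSucc k))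
    simp only [LinearMap.sum_apply, LinearMap.smul_apply, LinearMap.proj_apply,
      smul_eq_mul] at hφ
    have h1 : (∑ k : Fin s, g k * (Pi.single (Fin.last s) 1 : Fin (s+1) → F) (Fin.castSucc k))
        = 0 := by
      simp [Pi.single_apply, (Fin.castSucc_lt_last _).ne]
    have h2 : ∀ k' : Fin s,
        (∑ k : Fin s, g k *
          (Pi.single (Fin.castSucc k') 1 : Fin (s+1) → F) (Fin.castSucc k)) = g k' := by
      intro k'
      simp [Pi.single_apply, Fin.castSucc_inj]
    have h3 : ∀ i : Fin r, (∑ k : Fin s, g k * z i (Fin.castSucc k)) = 0 := by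
      intro i
      have := congrFun hg i
      simpa [Finset.sum_apply] using this
    rw [h1] at hφ
    simp only [h3, zero_smul, Finset.sum_const_zero] at hφ
    rw [zero_add] at hφ
    simp only [h2] at hφ
    exact Fintype.linearIndependent_iff.mp hli g hφ
  -- the columns span F^s
  have hspan : Submodule.span F
      (Set.range fun i : Fin r => fun k : Fin s => z i (Fin.castSucc k)) = ⊤ := by
    by_contra hne'
    obtain ⟨f, hf0, hfker⟩ := Submodule.exists_le_ker_of_lt_top _
      (lt_top_iff_ne_top.mpr hne')
    have hgz : ∀ i : Fin r, f (fun k => z i (Fin.castSucc k)) = 0 := fun i =>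
      hfker (Submodule.subset_span (Set.mem_range_self i))
    have hzero : ∀ k : Fin s, f (fun j => if k = j then (1:F) else 0) = 0 := by
      apply Fintype.linearIndependent_iff.mp hrows
      ext i
      have := hgz i
      rw [LinearMap.pi_apply_eq_sum_univ] at this
      simpa [Finset.sum_apply, mul_comm, smul_eq_mul] using this
    apply hf0
    apply LinearMap.ext
    intro w
    rw [LinearMap.pi_apply_eq_sum_univ]
    simp [hzero]
  -- extract s columns forming a basis
  obtain ⟨b, hbsub, hbspan, hbli⟩ := exists_linearIndependent F
    (Set.range fun i : Fin r => fun k : Fin s => z i (Fin.castSucc k))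
  rw [hspan] at hbspan
  have B : Module.Basis b F (Fin s → F) := Module.Basis.mk hbli (by rw [Subtype.range_coe]; exact hbspan.ge)
  haveI : Fintype b := FiniteDimensional.fintypeBasisIndex B
  have hcardb : Fintype.card b = s := by
    have := Module.finrank_eq_card_basis B
    rw [Module.finrank_fin_fun] at this
    omega
  obtain e := Fintype.equivFinOfCardEq hcardb
  have hchoice : ∀ w : b, ∃ i : Fin r,
      (fun k : Fin s => z i (Fin.castSucc k)) = (w : Fin s → F) := fun w => hbsub w.2
  choose g hgcol using hchoice
  set c : Fin s → Fin r := fun l => g (e.symm l) with hc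
  have hcolc : ∀ l, (fun k : Fin s => z (c l) (Fin.castSucc k))
      = ((e.symm l : b) : Fin s → F) := fun l => hgcol _
  have hcinj : Function.Injective c := by
    intro l1 l2 h
    have hval : ((e.symm l1 : b) : Fin s → F) = ((e.symm l2 : b) : Fin s → F) := by
      rw [← hcolc, ← hcolc, h]
    simpa using e.symm.injective (Subtype.ext hval)
  -- the square matrix N with columns col (c l) is invertible
  have hNcols : LinearIndependent F
      (fun l => (Matrix.of fun k l' : Fin s => z (c l') (Fin.castSucc k))ᵀ l) := by
    have heq : (fun l => (Matrix.of fun k l' : Fin s => z (c l') (Fin.castSucc k))ᵀ l)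
        = (fun w : b => (w : Fin s → F)) ∘ e.symm := by
      funext l
      exact hcolc l
    rw [heq]
    exact hbli.comp e.symm e.symm.injective
  have hNunit : IsUnit (Matrix.of fun k l' : Fin s => z (c l') (Fin.castSucc k)) :=
    Matrix.linearIndependent_cols_iff_isUnit.mp hNcols
  obtain ⟨μ, hμ⟩ := Matrix.vecMul_surjective_iff_isUnit.mpr hNunit
    (fun l => z (c l) (Fin.last s))
  have hμ' : ∀ l, ∑ k, μ k * z (c l) (Fin.castSucc k) = z (c l) (Fin.last s) := by
    intro l
    have := congrFun hμ l
    simpa [Matrix.vecMul, dotProduct] using this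
  -- the functional φ
  set φ : (Fin (s+1) → F) →ₗ[F] F :=
    LinearMap.proj (Fin.last s) - ∑ k : Fin s, μ k • LinearMap.proj (Fin.castSucc k) with hφdef
  have hφapp : ∀ w : Fin (s+1) → F, φ w = w (Fin.last s) - ∑ k, μ k * w (Fin.castSucc k) := by
    intro w
    simp [hφdef, smul_eq_mul]
  have hφlast : φ (Pi.single (Fin.last s) 1) = 1 := by
    rw [hφapp]
    simp [Pi.single_apply, (Fin.castSucc_lt_last _).ne]
  have hφk : ∀ k' : Fin s, φ (Pi.single (Fin.castSucc k') 1) = -μ k' := by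
    intro k'
    rw [hφapp]
    simp [Pi.single_apply, (Fin.castSucc_lt_last k').ne', Fin.castSucc_inj]
  have hφzero : ∀ l, φ (z (c l)) = 0 := by
    intro l
    rw [hφapp, hμ' l, sub_self]
  -- the key identity with this φ
  have hkey := key φ
  rw [hφlast, one_smul] at hkey
  have hkey' : A + (- ∑ k : Fin s, μ k • (u k ⊗ₜ[F] v k))
      = ∑ i : Fin r, φ (z i) • (x i ⊗ₜ[F] y i) := by
    rw [← hkey]
    congr 1
    rw [← Finset.sum_neg_distrib]
    exact Finset.sum_congr rfl fun k _ => by rw [hφk k]; exact (neg_smul (μ k) (u k ⊗ₜ[F] v k)).symm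
  -- restrict the sum to the complement of C
  set C : Finset (Fin r) := Finset.univ.map ⟨c, hcinj⟩ with hC
  have hCcard : C.card = s := by simp [hC]
  have hsr : s ≤ r := by
    have := Finset.card_le_univ C
    simpa [hCcard] using this
  have hsum_compl : ∑ i : Fin r, φ (z i) • (x i ⊗ₜ[F] y i)
      = ∑ i ∈ Cᶜ, φ (z i) • (x i ⊗ₜ[F] y i) := by
    symm
    apply Finset.sum_subset (Finset.subset_univ _)
    intro i _ hi
    have hiC : i ∈ C := by
      by_contra h
      exact hi (Finset.mem_compl.mpr h)
    obtain ⟨l, _, hl⟩ := Finset.mem_map.mp hiC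
    rw [← hl]
    simp only [Function.Embedding.coeFn_mk]
    rw [hφzero l, zero_smul]
  have hCccard : Cᶜ.card = r - s := by
    rw [Finset.card_compl, hCcard]
    simp
  -- the element u0 of U
  set u0 := - ∑ k : Fin s, μ k • (u k ⊗ₜ[F] v k) with hu0
  have hu0U : u0 ∈ U := by
    rw [hU]
    apply Submodule.neg_mem
    apply Submodule.sum_mem
    intro k _
    exact Submodule.smul_mem _ _ (Submodule.subset_span ⟨k, rfl⟩)
  -- tensorRank2 (A + u0) ≤ r - s
  have hrank2 : tensorRank2 (A + u0) ≤ r - s := by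
    apply Nat.sInf_le
    set E := Cᶜ.equivFin.trans (finCongr hCccard) with hE
    refine ⟨fun j => φ (z (E.symm j)) • x (E.symm j), fun j => y (E.symm j), ?_⟩
    have hconv : ∑ j : Fin (r - s), ((φ (z (E.symm j)) • x (E.symm j)) ⊗ₜ[F] y (E.symm j))
        = ∑ i ∈ Cᶜ, φ (z i) • (x i ⊗ₜ[F] y i) := by
      rw [← Finset.sum_attach Cᶜ (fun i => φ (z i) • (x i ⊗ₜ[F] y i))]
      refine Fintype.sum_equiv E.symm _ _ (fun j => ?_)
      rw [TensorProduct.smul_tmul']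
    rw [hu0, hkey', hsum_compl, ← hconv]
  -- conclude
  have hAU : rankAU A U ≤ r - s :=
    le_trans (Nat.sInf_le ⟨u0, hu0U, rfl⟩) hrank2
  omega

end Aux

/-- if the pure tensors `u_k ⊗ v_k` are linearly independent, then
`rank(A,U) + s ≤ rank(Â)`. -/
theorem rankAU_add_le_tensorRank_hat {F : Type*} [Field F] {n m s : ℕ}
    (A : (Fin n → F) ⊗[F] (Fin m → F))
    (u : Fin s → Fin n → F) (v : Fin s → Fin m → F)
    (hli : LinearIndependent F fun k : Fin s => u k ⊗ₜ[F] v k)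
    (U : Submodule F ((Fin n → F) ⊗[F] (Fin m → F)))
    (hU : U = Submodule.span F (Set.range fun k : Fin s => u k ⊗ₜ[F] v k)) :
    rankAU A U + s ≤
      tensorRank3
        (A ⊗ₜ[F] (Pi.single (Fin.last s) 1 : Fin (s + 1) → F)
          + ∑ k : Fin s, (u k ⊗ₜ[F] v k) ⊗ₜ[F]
              (Pi.single (Fin.castSucc k) 1 : Fin (s + 1) → F)) := by
  have hne : {r : ℕ | ∃ (x : Fin r → Fin n → F) (y : Fin r → Fin m → F)
      (z : Fin r → Fin (s+1) → F),
      A ⊗ₜ[F] (Pi.single (Fin.last s) 1 : Fin (s + 1) → F)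
          + ∑ k : Fin s, (u k ⊗ₜ[F] v k) ⊗ₜ[F]
              (Pi.single (Fin.castSucc k) 1 : Fin (s + 1) → F)
        = ∑ i : Fin r, (x i ⊗ₜ[F] y i) ⊗ₜ[F] z i}.Nonempty := by
    obtain ⟨r0, x, y, z, e⟩ := exists_sum_tmul3 (F := F)
      (A ⊗ₜ[F] (Pi.single (Fin.last s) 1 : Fin (s + 1) → F)
          + ∑ k : Fin s, (u k ⊗ₜ[F] v k) ⊗ₜ[F]
              (Pi.single (Fin.castSucc k) 1 : Fin (s + 1) → F))
    exact ⟨r0, x, y, z, e⟩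
  obtain ⟨x, y, z, hA⟩ := Nat.sInf_mem hne
  exact core_lemma A u v hli U hU x y z hA
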